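/- Let G = (V, E) be a connected graph with m edges, and let G' be the Metric Steiner Tree instance with vertex set {[v] : v ∈ V} ∪ {[u,v] : (u,v) ∈ E}, where d([u],[u,v]) = d([v],[u,v]) = 1 for each edge (u,v) ∈ E, d([u],[v]) = 1 for all distinct u,v ∈ V, and all other distances equal 2, with terminal set C = {[u,v] : (u,v) ∈ E}. If G has a vertex cover of size k, then G' has a Steiner tree spanning C of total cost at most m + k − 1. -/

import Mathlib

/-- The distances of the Bern–Plassmann Metric Steiner Tree instance `G'` built from a
graph `G`: vertices are `Sum.inl u` for vertices `u` of `G` and `Sum.inr e` for edges `e`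
of `G`; distance 1 between `[u]` and `[u,v]` when `u` is an endpoint of the edge `(u,v)`,
distance 1 between any two distinct vertices `[u]`, `[v]`, and 2 otherwise. -/
def steinerWeight {V : Type*} [Fintype V] [DecidableEq V] (G : SimpleGraph V)
    [DecidableRel G.Adj] :
    (V ⊕ G.edgeFinset) → (V ⊕ G.edgeFinset) → ℕ
  | Sum.inl u, Sum.inl v => if u = v then 0 else 1
  | Sum.inl u, Sum.inr e => if u ∈ (e : Sym2 V) then 1 else 2
  | Sum.inr e, Sum.inl u => if u ∈ (e : Sym2 V) then 1 else 2
  | Sum.inr e, Sum.inr f => if e = f then 0 else 2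

open SimpleGraph Walk

lemma cycle_at_max_false {α : Type*} (G : SimpleGraph α) (r : α → ℕ)
    (hne : ∀ ⦃x y⦄, G.Adj x y → r x ≠ r y)
    (huniq : ∀ ⦃x y z⦄, G.Adj y x → G.Adj z x → r y < r x → r z < r x → y = z)
    (u : α) (c : G.Walk u u) (hc : c.IsCycle)
    (hmax : ∀ w ∈ c.support, r w ≤ r u) : False := by
  cases c with
  | nil => exact hc.not_of_nil
  | cons h p =>
    rename_i x
    rw [Walk.cons_isCycle_iff] at hc
    obtain ⟨hp, hedge⟩ := hc
    have hnil : ¬ p.Nil := Walk.not_nil_of_ne h.ne'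
    have hd : p.darts ≠ [] := by
      have hlen : p.length ≠ 0 := fun h0 => hnil (Walk.nil_iff_length_eq.mpr h0)
      intro hcon
      have h2 := p.length_darts
      rw [hcon] at h2
      simp at h2
      exact hlen h2.symm
    set d := p.darts.getLast hd with hddef
    have hsnd : d.snd = u := by rw [hddef, p.getLast_darts_eq_lastDart hd]; rfl
    have hdmem : d ∈ p.darts := List.getLast_mem hd
    have hfst : d.fst ∈ p.support := p.dart_fst_mem_support_of_mem_darts hdmem
    have hadj : G.Adj d.fst u := hsnd ▸ d.adj
    have hx : r x < r u := by
      have h1 : r x ≤ r u := hmax x (by simp [Walk.support_cons])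
      exact lt_of_le_of_ne h1 (hne h.symm)
    have hdlt : r d.fst < r u := by
      have h1 : r d.fst ≤ r u := hmax d.fst (by simp [Walk.support_cons, hfst])
      exact lt_of_le_of_ne h1 (hne hadj)
    have hxd : x = d.fst := huniq h.symm hadj hx hdlt
    apply hedge
    have : d.edge ∈ p.edges := List.mem_map_of_mem hdmem
    have hde : d.edge = s(u, x) := by
      have hpr : d.toProd = (x, u) := Prod.ext hxd.symm hsnd
      rw [Dart.edge, hpr]
      exact Sym2.eq_swap
    rwa [hde] at this

lemma acyclic_of_rank {α : Type*} (G : SimpleGraph α) (r : α → ℕ)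
    (hne : ∀ ⦃x y⦄, G.Adj x y → r x ≠ r y)
    (huniq : ∀ ⦃x y z⦄, G.Adj y x → G.Adj z x → r y < r x → r z < r x → y = z) :
    G.IsAcyclic := by
  classical
  intro v c hc
  obtain ⟨u, hu, hmax⟩ := c.support.toFinset.exists_max_image r
    ⟨v, by simp [Walk.start_mem_support]⟩
  rw [List.mem_toFinset] at hu
  refine cycle_at_max_false G r hne huniq u (c.rotate u hu) (hc.rotate hu) ?_
  intro w hw
  have hperm := c.support_rotate u hu
  have hw' : w ∈ c.support := by
    rw [Walk.support_eq_cons (c.rotate u hu)] at hw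
    rcases List.mem_cons.1 hw with rfl | hw
    · exact hu
    · exact List.mem_of_mem_tail (hperm.mem_iff.1 hw)
  exact hmax w (List.mem_toFinset.2 hw')

/-- Bern–Plassmann reduction, easy direction: if a connected graph `G` with `m` edges
has a vertex cover of size `k`, then the Metric Steiner Tree instance `G'` with terminal
set `C = {[u,v] : (u,v) ∈ E}` has a Steiner tree (an acyclic edge set connecting all
terminals) of total cost at most `m + k − 1`. -/
theorem vertex_cover_to_steiner_tree {V : Type*} [Fintype V] [DecidableEq V]
    (G : SimpleGraph V) [DecidableRel G.Adj] (hconn : G.Connected)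
    (m k : ℕ) (hm : G.edgeFinset.card = m)
    (S : Finset V) (hcover : ∀ u v, G.Adj u v → u ∈ S ∨ v ∈ S) (hk : S.card = k) :
    ∃ F : Finset ((V ⊕ G.edgeFinset) × (V ⊕ G.edgeFinset)),
      (SimpleGraph.fromRel (fun x y => (x, y) ∈ F)).IsAcyclic ∧
      (∀ e e' : G.edgeFinset,
        (SimpleGraph.fromRel (fun x y => (x, y) ∈ F)).Reachable (Sum.inr e) (Sum.inr e')) ∧
      (∑ p ∈ F, steinerWeight G p.1 p.2) ≤ m + k - 1 := by
  classical
  by_cases hE : G.edgeFinset = ∅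
  · refine ⟨∅, ?_, ?_, ?_⟩
    · have hbot : (SimpleGraph.fromRel
          (fun x y : (V ⊕ G.edgeFinset) => (x, y) ∈ (∅ : Finset _))) = ⊥ := by
        ext a b
        simp [SimpleGraph.fromRel_adj]
      rw [hbot]
      exact SimpleGraph.isAcyclic_bot
    · rintro ⟨e, he⟩
      rw [hE] at he
      exact absurd he (Finset.notMem_empty e)
    · simp
  · -- main case
    obtain ⟨e0, he0⟩ := Finset.nonempty_iff_ne_empty.2 hE
    have hS0 : ∃ s, s ∈ S := by
      induction e0 using Sym2.ind with
      | _ a b =>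
        rw [SimpleGraph.mem_edgeFinset, SimpleGraph.mem_edgeSet] at he0
        rcases hcover a b he0 with h | h
        · exact ⟨a, h⟩
        · exact ⟨b, h⟩
    obtain ⟨s0, hs0⟩ := hS0
    have hfex : ∀ e : G.edgeFinset, ∃ w, w ∈ S ∧ w ∈ (e : Sym2 V) := by
      rintro ⟨e, he⟩
      induction e using Sym2.ind with
      | _ a b =>
        rw [SimpleGraph.mem_edgeFinset, SimpleGraph.mem_edgeSet] at he
        rcases hcover a b he with h | h
        · exact ⟨a, h, by simp⟩
        · exact ⟨b, h, by simp⟩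
    choose f hfS hfmem using hfex
    set F₁ : Finset ((V ⊕ G.edgeFinset) × (V ⊕ G.edgeFinset)) :=
      (S.erase s0).image (fun s => (Sum.inl s0, Sum.inl s)) with hF₁
    set F₂ : Finset ((V ⊕ G.edgeFinset) × (V ⊕ G.edgeFinset)) :=
      G.edgeFinset.attach.image (fun e => (Sum.inl (f e), Sum.inr e)) with hF₂
    set F := F₁ ∪ F₂ with hF
    have hmem : ∀ p ∈ F, (∃ s, s ∈ S ∧ s ≠ s0 ∧ p = (Sum.inl s0, Sum.inl s)) ∨
        (∃ e : G.edgeFinset, p = (Sum.inl (f e), Sum.inr e)) := by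
      intro p hp
      rcases Finset.mem_union.1 hp with h | h
      · left
        obtain ⟨s, hs, rfl⟩ := Finset.mem_image.1 h
        exact ⟨s, (Finset.mem_erase.1 hs).2, (Finset.mem_erase.1 hs).1, rfl⟩
      · right
        obtain ⟨e, _, rfl⟩ := Finset.mem_image.1 h
        exact ⟨e, rfl⟩
    set r : (V ⊕ G.edgeFinset) → ℕ :=
      fun x => match x with
        | Sum.inl v => if v = s0 then 0 else 1
        | Sum.inr _ => 2 with hr
    have hr0 : ∀ w, r w = 0 → w = Sum.inl s0 := by
      rintro (w | w) hw
      · simp only [hr] at hw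
        split at hw
        · subst_vars; rfl
        · exact absurd hw one_ne_zero
      · simp [hr] at hw
    have hrne : ∀ ⦃x y : V ⊕ G.edgeFinset⦄,
        (SimpleGraph.fromRel (fun x y => (x, y) ∈ F)).Adj x y → r x ≠ r y := by
      intro x y hxy
      rw [SimpleGraph.fromRel_adj] at hxy
      obtain ⟨hne', h | h⟩ := hxy
      · rcases hmem _ h with ⟨s, _, hs, hp⟩ | ⟨e, hp⟩
        · obtain ⟨rfl, rfl⟩ := Prod.mk.injEq .. ▸ hp
          simp [hr, hs]
        · obtain ⟨rfl, rfl⟩ := Prod.mk.injEq .. ▸ hp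
          simp only [hr]
          split <;> omega
      · rcases hmem _ h with ⟨s, _, hs, hp⟩ | ⟨e, hp⟩
        · obtain ⟨rfl, rfl⟩ := Prod.mk.injEq .. ▸ hp
          simp [hr, hs]
        · obtain ⟨rfl, rfl⟩ := Prod.mk.injEq .. ▸ hp
          simp only [hr]
          split <;> omega
    -- any neighbor of (inr e) is inl (f e)
    have hnbr : ∀ (e : G.edgeFinset) (w : V ⊕ G.edgeFinset),
        (SimpleGraph.fromRel (fun x y => (x, y) ∈ F)).Adj w (Sum.inr e) →
        w = Sum.inl (f e) := by
      intro e w hw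
      rw [SimpleGraph.fromRel_adj] at hw
      obtain ⟨hne', h | h⟩ := hw
      · rcases hmem _ h with ⟨s, _, _, hp⟩ | ⟨e', hp⟩
        · exact absurd (congrArg Prod.snd hp) (by simp)
        · have h1 := congrArg Prod.snd hp
          have h2 := congrArg Prod.fst hp
          simp only at h1 h2
          obtain rfl : e' = e := by
            injection h1 with h1'
            exact h1'.symm
          exact h2
      · rcases hmem _ h with ⟨s, _, _, hp⟩ | ⟨e', hp⟩
        · exact absurd (congrArg Prod.fst hp) (by simp)
        · exact absurd (congrArg Prod.fst hp) (by simp)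
    have hacyc : (SimpleGraph.fromRel (fun x y => (x, y) ∈ F)).IsAcyclic := by
      apply acyclic_of_rank _ r hrne
      intro x y z hyx hzx hy hz
      match x with
      | Sum.inr e =>
        rw [hnbr e y hyx, hnbr e z hzx]
      | Sum.inl v =>
        have hx1 : r (Sum.inl v) ≤ 1 := by
          simp only [hr]; split <;> omega
        have hy0 : r y = 0 := by omega
        have hz0 : r z = 0 := by omega
        rw [hr0 y hy0, hr0 z hz0]
    -- reachability
    have hadjE : ∀ e : G.edgeFinset,
        (SimpleGraph.fromRel (fun x y => (x, y) ∈ F)).Adj (Sum.inr e) (Sum.inl (f e)) := by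
      intro e
      rw [SimpleGraph.fromRel_adj]
      refine ⟨by simp, Or.inr ?_⟩
      apply Finset.mem_union_right
      exact Finset.mem_image.2 ⟨e, Finset.mem_attach _ _, rfl⟩
    have hreachS : ∀ e : G.edgeFinset,
        (SimpleGraph.fromRel (fun x y => (x, y) ∈ F)).Reachable (Sum.inl (f e)) (Sum.inl s0) := by
      intro e
      by_cases h : f e = s0
      · rw [h]
      · apply SimpleGraph.Adj.reachable
        apply SimpleGraph.Adj.symm
        rw [SimpleGraph.fromRel_adj]
        refine ⟨?_, Or.inl ?_⟩
        · simp only [ne_eq, Sum.inl.injEq]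
          exact fun hh => h hh.symm
        apply Finset.mem_union_left
        exact Finset.mem_image.2 ⟨f e, Finset.mem_erase.2 ⟨h, hfS e⟩, rfl⟩
    have hreach : ∀ e e' : G.edgeFinset,
        (SimpleGraph.fromRel (fun x y => (x, y) ∈ F)).Reachable (Sum.inr e) (Sum.inr e') := by
      intro e e'
      exact ((hadjE e).reachable.trans (hreachS e)).trans
        ((hreachS e').symm.trans (hadjE e').reachable.symm)
    refine ⟨F, hacyc, hreach, ?_⟩
    -- cost
    have hdisj : Disjoint F₁ F₂ := by
      rw [Finset.disjoint_left]
      intro p hp1 hp2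
      obtain ⟨s, _, rfl⟩ := Finset.mem_image.1 hp1
      obtain ⟨e, _, hp⟩ := Finset.mem_image.1 hp2
      exact absurd (congrArg Prod.snd hp) (by simp)
    have hsum1 : (∑ p ∈ F₁, steinerWeight G p.1 p.2) = k - 1 := by
      rw [hF₁, Finset.sum_image (by intro a _ b _ h; simpa using congrArg Prod.snd h)]
      rw [Finset.sum_congr rfl (fun s hs => ?_)]
      · rw [Finset.sum_const, smul_eq_mul, mul_one, Finset.card_erase_of_mem hs0, hk]
      · show steinerWeight G (Sum.inl s0) (Sum.inl s) = 1
        have : s ≠ s0 := (Finset.mem_erase.1 hs).1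
        simp [steinerWeight, Ne.symm this]
    have hsum2 : (∑ p ∈ F₂, steinerWeight G p.1 p.2) = m := by
      rw [hF₂, Finset.sum_image (by intro a _ b _ h; simpa using congrArg Prod.snd h)]
      rw [Finset.sum_congr rfl (fun e _ => ?_)]
      · rw [Finset.sum_const, smul_eq_mul, mul_one, Finset.card_attach, hm]
      · show steinerWeight G (Sum.inl (f e)) (Sum.inr e) = 1
        simp [steinerWeight, hfmem e]
    have hk1 : 1 ≤ k := by
      rw [← hk]
      exact Finset.card_pos.2 ⟨s0, hs0⟩
    rw [hF, Finset.sum_union hdisj, hsum1, hsum2]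
    omega
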